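/- arXiv:1712.02416 — 2 statements merged into one kernel-verified Lean document; each statement's English description precedes it below -/
import Mathlib

section
/- For variables $x_1,\dots,x_n$, $y$, and $\alpha$ in a field of characteristic zero (with all denominators nonzero), the following identity holds: $(1 - \frac{y+1-\alpha}{\alpha}) \prod_{i=1}^n \frac{x_i-y+\alpha-1}{x_i-y+\alpha} + \frac{y+1-\alpha}{\alpha} \prod_{i=1}^n \frac{x_i-y-1}{x_i-y} = 1 - \sum_{i=1}^n \frac{\alpha}{(x_i-y+\alpha)(x_i-y)} \cdot \frac{x_i+1-\alpha}{\alpha} \prod_{k\neq i} \frac{x_k-x_i-1}{x_k-x_i}$. -/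
open Finset

theorem aux0 {K : Type*} [Field K] {ι : Type*} [DecidableEq ι] (x : ι → K) (α : K)
    (hα : α ≠ 0) (s : Finset ι) :
    (∀ i ∈ s, ∀ k ∈ s, i ≠ k → x k - x i ≠ 0) →
    ∀ z : K, (∀ i ∈ s, x i - z ≠ 0) →
    (z + 1 - α) / α * ∏ i ∈ s, (x i - z - 1) / (x i - z)
      = (z + 1 - α + s.card) / α
        - ∑ i ∈ s, ((x i + 1 - α) / α * ∏ k ∈ s.erase i, (x k - x i - 1) / (x k - x i))
            / (x i - z) := by
  induction s using Finset.induction_on with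
  | empty => intro _ z _; simp
  | @insert a s ha ih =>
    intro hd z hz
    have hza : x a - z ≠ 0 := hz a (mem_insert_self a s)
    have hzs : ∀ i ∈ s, x i - z ≠ 0 := fun i hi => hz i (mem_insert_of_mem hi)
    have hds : ∀ i ∈ s, ∀ k ∈ s, i ≠ k → x k - x i ≠ 0 := fun i hi k hk h =>
      hd i (mem_insert_of_mem hi) k (mem_insert_of_mem hk) h
    have hne : ∀ i ∈ s, i ≠ a := fun i hi h => ha (h ▸ hi)
    have hia : ∀ i ∈ s, x i - x a ≠ 0 := fun i hi =>
      hd a (mem_insert_self a s) i (mem_insert_of_mem hi) (fun h => ha (h ▸ hi))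
    have hai : ∀ i ∈ s, x a - x i ≠ 0 := fun i hi =>
      hd i (mem_insert_of_mem hi) a (mem_insert_self a s) (hne i hi)
    have IH1 := ih hds z hzs
    have IH2 := ih hds (x a) hia
    rw [Finset.prod_insert ha, Finset.sum_insert ha, Finset.card_insert_of_notMem ha,
      Finset.erase_insert ha]
    push_cast
    have hsum : ∑ i ∈ s, ((x i + 1 - α) / α *
          ∏ k ∈ (insert a s).erase i, (x k - x i - 1) / (x k - x i)) / (x i - z)
        = (x a - z - 1) / (x a - z) *
            ∑ i ∈ s, ((x i + 1 - α) / α *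
              ∏ k ∈ s.erase i, (x k - x i - 1) / (x k - x i)) / (x i - z)
          + (∑ i ∈ s, ((x i + 1 - α) / α *
              ∏ k ∈ s.erase i, (x k - x i - 1) / (x k - x i)) / (x i - x a)) / (x a - z) := by
      rw [Finset.mul_sum, Finset.sum_div, ← Finset.sum_add_distrib]
      refine Finset.sum_congr rfl fun i hi => ?_
      have h1 : (insert a s).erase i = insert a (s.erase i) :=
        Finset.erase_insert_of_ne ((hne i hi).symm)
      have h2 : a ∉ s.erase i := fun h => ha (Finset.mem_of_mem_erase h)
      rw [h1, Finset.prod_insert h2]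
      have hu := hzs i hi
      have hw := hia i hi
      have hw' := hai i hi
      set Q := ∏ k ∈ s.erase i, (x k - x i - 1) / (x k - x i) with hQ
      field_simp
      ring
    rw [hsum, IH2]
    have hc : (z + 1 - α + ((s.card : K) + 1)) / α
        = ((x a + 1 - α + s.card) / α) / (x a - z)
          + (x a - z - 1) / (x a - z) * ((z + 1 - α + s.card) / α) := by
      field_simp
      ring
    linear_combination (x a - z - 1) / (x a - z) * IH1 - hc

/-- Lemma 4.3 of the paper: rational-function identity behind the Pieri rules. -/
theorem stmt0 {K : Type*} [Field K] [CharZero K] (n : ℕ) (x : Fin n → K) (y α : K)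
    (hα : α ≠ 0) (h1 : ∀ i, x i - y ≠ 0) (h2 : ∀ i, x i - y + α ≠ 0)
    (h3 : ∀ i k : Fin n, i ≠ k → x k - x i ≠ 0) :
    (1 - (y + 1 - α) / α) * ∏ i, (x i - y + α - 1) / (x i - y + α)
      + ((y + 1 - α) / α) * ∏ i, (x i - y - 1) / (x i - y)
    = 1 - ∑ i, α / ((x i - y + α) * (x i - y)) * ((x i + 1 - α) / α)
        * ∏ k ∈ univ.erase i, (x k - x i - 1) / (x k - x i) := by
  have hd : ∀ i ∈ (univ : Finset (Fin n)), ∀ k ∈ (univ : Finset (Fin n)),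
      i ≠ k → x k - x i ≠ 0 := fun i _ k _ h => h3 i k h
  have E1 := aux0 x α hα univ hd y (fun i _ => h1 i)
  have E2 := aux0 x α hα univ hd (y - α)
    (fun i _ => by rw [show x i - (y - α) = x i - y + α by ring]; exact h2 i)
  simp only [card_univ, Fintype.card_fin] at E1 E2
  have hp : ∀ i : Fin n,
      (x i - (y - α) - 1) / (x i - (y - α)) = (x i - y + α - 1) / (x i - y + α) := by
    intro i; rw [show x i - (y - α) = x i - y + α by ring]
  rw [Finset.prod_congr rfl (fun i _ => hp i)] at E2
  have hq : ∀ i : Fin n,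
      ((x i + 1 - α) / α * ∏ k ∈ univ.erase i, (x k - x i - 1) / (x k - x i)) / (x i - (y - α))
      = ((x i + 1 - α) / α * ∏ k ∈ univ.erase i, (x k - x i - 1) / (x k - x i))
          / (x i - y + α) := by
    intro i; rw [show x i - (y - α) = x i - y + α by ring]
  rw [Finset.sum_congr rfl (fun i _ => hq i)] at E2
  have hs : ∑ i, α / ((x i - y + α) * (x i - y)) * ((x i + 1 - α) / α)
        * ∏ k ∈ univ.erase i, (x k - x i - 1) / (x k - x i)
      = ∑ i, (((x i + 1 - α) / α * ∏ k ∈ univ.erase i, (x k - x i - 1) / (x k - x i))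
            / (x i - y)
          - ((x i + 1 - α) / α * ∏ k ∈ univ.erase i, (x k - x i - 1) / (x k - x i))
            / (x i - y + α)) := by
    refine Finset.sum_congr rfl fun i _ => ?_
    have hu := h1 i
    have hv := h2 i
    set Q := ∏ k ∈ univ.erase i, (x k - x i - 1) / (x k - x i) with hQ
    field_simp
    ring
  rw [Finset.sum_sub_distrib] at hs
  have hone : (y + 1 - α + (n : K)) / α - (y - α + 1 - α + (n : K)) / α = 1 := by
    field_simp
    ring
  have hcc : 1 - (y + 1 - α) / α = -((y - α + 1 - α) / α) := by
    field_simp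
    ring
  linear_combination E1 - E2 + hs + hone
    + (∏ i, (x i - y + α - 1) / (x i - y + α)) * hcc
end

section
/- For $n \geq 1$, let $M$ be the $(n+1)\times(n+1)$ matrix over the field $\mathbb{Q}(x_1,\dots,x_n,y_1,\dots,y_{n+1},\alpha)$ whose first row is all $1$'s and whose $(i+1,j)$ entry is $\frac{\alpha}{(x_i-y_j+\alpha)(x_i-y_j)}$ for $1 \le i \le n$, $1 \le j \le n+1$. For $1 \le j \le n+1$ let $M^{(j)}$ be the $n\times n$ matrix obtained by deleting the first row and the $j$-th column of $M$. Then $\sum_{j=1}^{n+1} (-1)^{j-1}\left[ (1 - \tfrac{y_j+1-\alpha}{\alpha}) \prod_{i=1}^n \tfrac{x_i-y_j+\alpha-1}{x_i-y_j+\alpha} + \tfrac{y_j+1-\alpha}{\alpha} \prod_{i=1}^n \tfrac{x_i-y_j-1}{x_i-y_j}\right] \det M^{(j)} = \det M$. -/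
open Finset

lemma claimA {K : Type*} [Field K] {ι : Type*} [DecidableEq ι] (c : ι → K) :
    ∀ (s : Finset ι), (∀ i ∈ s, ∀ k ∈ s, i ≠ k → c i ≠ c k) →
    ∀ t : K, (∀ i ∈ s, c i - t ≠ 0) →
    ∏ i ∈ s, (c i - t - 1) / (c i - t)
      = 1 - ∑ i ∈ s, (∏ k ∈ s.erase i, (c k - c i - 1) / (c k - c i)) / (c i - t) := by
  intro s
  induction s using Finset.induction_on with
  | empty => simp
  | @insert a s ha IH =>
    intro hdist t ht
    have hats : ∀ i ∈ s, c i - t ≠ 0 := fun i hi => ht i (mem_insert_of_mem hi)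
    have hat : c a - t ≠ 0 := ht a (mem_insert_self a s)
    have hdists : ∀ i ∈ s, ∀ k ∈ s, i ≠ k → c i ≠ c k := fun i hi k hk =>
      hdist i (mem_insert_of_mem hi) k (mem_insert_of_mem hk)
    have hca : ∀ i ∈ s, c i - c a ≠ 0 := by
      intro i hi
      have : c i ≠ c a := hdist i (mem_insert_of_mem hi) a (mem_insert_self a s)
        (by rintro rfl; exact ha hi)
      exact sub_ne_zero_of_ne this
    have IH1 := IH hdists t hats
    have IH2 := IH hdists (c a) hca
    rw [prod_insert ha, sum_insert ha, IH1, erase_insert ha]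
    have herase : ∀ i ∈ s,
        (∏ k ∈ (insert a s).erase i, (c k - c i - 1) / (c k - c i)) / (c i - t)
          = ((c a - c i - 1) / (c a - c i)) * (∏ k ∈ s.erase i, (c k - c i - 1) / (c k - c i))
              / (c i - t) := by
      intro i hi
      have hne : a ≠ i := by rintro rfl; exact ha hi
      rw [Finset.erase_insert_of_ne hne, prod_insert (fun h => ha (mem_of_mem_erase h))]
    rw [Finset.sum_congr rfl herase]
    set S1 := ∑ i ∈ s, (∏ k ∈ s.erase i, (c k - c i - 1) / (c k - c i)) / (c i - t) with hS1
    set S2 := ∑ i ∈ s, (∏ k ∈ s.erase i, (c k - c i - 1) / (c k - c i)) / (c i - c a) with hS2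
    have hsum : ∑ i ∈ s, ((c a - c i - 1) / (c a - c i))
          * (∏ k ∈ s.erase i, (c k - c i - 1) / (c k - c i)) / (c i - t)
        = ((c a - t - 1) / (c a - t)) * S1
            + S2 * (1 / (c a - t)) := by
      rw [hS1, hS2, Finset.mul_sum, Finset.sum_mul, ← Finset.sum_add_distrib]
      refine Finset.sum_congr rfl fun i hi => ?_
      have h1 : c i - t ≠ 0 := hats i hi
      have h2 : c i - c a ≠ 0 := hca i hi
      have h3 : c a - c i ≠ 0 := fun h => h2 (by linear_combination -h)
      obtain ⟨e, he⟩ : ∃ e, ∏ k ∈ s.erase i, (c k - c i - 1) / (c k - c i) = e := ⟨_, rfl⟩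
      rw [he]
      field_simp
      ring
    rw [hsum, IH2]
    field_simp
    ring

lemma keyId {K : Type*} [Field K] {n : ℕ} (x : Fin n → K) (hinj : Function.Injective x)
    (α : K) (hα : α ≠ 0) (t : K) (h1 : ∀ i, x i - t ≠ 0) (h2 : ∀ i, x i - t + α ≠ 0) :
    (1 - (t + 1 - α) / α) * ∏ i, (x i - t + α - 1) / (x i - t + α)
      + ((t + 1 - α) / α) * ∏ i, (x i - t - 1) / (x i - t)
    = 1 - ∑ i, (((x i + 1 - α) / α) * ∏ k ∈ univ.erase i, (x k - x i - 1) / (x k - x i))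
        * (α / ((x i - t + α) * (x i - t))) := by
  have hd : ∀ i ∈ (univ : Finset (Fin n)), ∀ k ∈ (univ : Finset (Fin n)), i ≠ k → x i ≠ x k :=
    fun i _ k _ hik h => hik (hinj h)
  have hQ := claimA x univ hd t (fun i _ => h1 i)
  have hd' : ∀ i ∈ (univ : Finset (Fin n)), ∀ k ∈ (univ : Finset (Fin n)), i ≠ k →
      x i + α ≠ x k + α := fun i _ k _ hik h => hik (hinj (by linear_combination h))
  have hP := claimA (fun i => x i + α) univ hd' t
    (fun i _ => by have := h2 i; intro h; exact this (by linear_combination h))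
  rw [show (∏ i, ((fun i => x i + α) i - t - 1) / ((fun i => x i + α) i - t))
      = ∏ i, (x i - t + α - 1) / (x i - t + α) from
    Finset.prod_congr rfl (fun i _ => by ring_nf)] at hP
  rw [show (∑ i, (∏ k ∈ univ.erase i,
        ((fun i => x i + α) k - (fun i => x i + α) i - 1)
          / ((fun i => x i + α) k - (fun i => x i + α) i)) / ((fun i => x i + α) i - t))
      = ∑ i, (∏ k ∈ univ.erase i, (x k - x i - 1) / (x k - x i)) / (x i - t + α) from
    Finset.sum_congr rfl (fun i _ => by
      congr 1
      · exact Finset.prod_congr rfl (fun k _ => by ring_nf)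
      · ring)] at hP
  rw [hP, hQ]
  have hsum : ∑ i, ((1 - (t + 1 - α) / α)
        * ((∏ k ∈ univ.erase i, (x k - x i - 1) / (x k - x i)) / (x i - t + α))
      + ((t + 1 - α) / α) * ((∏ k ∈ univ.erase i, (x k - x i - 1) / (x k - x i)) / (x i - t)))
      = ∑ i, (((x i + 1 - α) / α) * ∏ k ∈ univ.erase i, (x k - x i - 1) / (x k - x i))
        * (α / ((x i - t + α) * (x i - t))) := by
    refine Finset.sum_congr rfl fun i _ => ?_
    obtain ⟨e, he⟩ : ∃ e, ∏ k ∈ univ.erase i, (x k - x i - 1) / (x k - x i) = e := ⟨_, rfl⟩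
    rw [he]
    have hA := h2 i
    have hB := h1 i
    field_simp
    ring
  rw [← hsum, Finset.sum_add_distrib, ← Finset.mul_sum, ← Finset.mul_sum]
  ring

/-- Identity (4.24) of the paper: the cofactor expansion identity expressing
`det M` via the minors `M⁽ʲ⁾` and the bracketed rational coefficients. -/
theorem stmt3 {K : Type*} [Field K] [CharZero K] (n : ℕ) (hn : 1 ≤ n)
    (x : Fin n → K) (y : Fin (n + 1) → K) (α : K) (hα : α ≠ 0)
    (h1 : ∀ i j, x i - y j ≠ 0) (h2 : ∀ i j, x i - y j + α ≠ 0) :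
    let M : Matrix (Fin (n + 1)) (Fin (n + 1)) K := Matrix.of fun i j =>
      Fin.cases 1 (fun i' => α / ((x i' - y j + α) * (x i' - y j))) i
    let Mdel : Fin (n + 1) → Matrix (Fin n) (Fin n) K := fun j => Matrix.of fun i k =>
      α / ((x i - y (j.succAbove k) + α) * (x i - y (j.succAbove k)))
    ∑ j : Fin (n + 1), (-1 : K) ^ (j : ℕ) *
        ((1 - (y j + 1 - α) / α) * ∏ i, (x i - y j + α - 1) / (x i - y j + α)
          + ((y j + 1 - α) / α) * ∏ i, (x i - y j - 1) / (x i - y j)) * (Mdel j).det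
      = M.det := by
  intro M Mdel
  by_cases hinj : Function.Injective x
  · -- main case
    set c : Fin (n + 1) → K := fun j =>
      (1 - (y j + 1 - α) / α) * ∏ i, (x i - y j + α - 1) / (x i - y j + α)
        + ((y j + 1 - α) / α) * ∏ i, (x i - y j - 1) / (x i - y j) with hc
    set w : Fin (n + 1) → K := Fin.cases 1
      (fun i => -(((x i + 1 - α) / α) * ∏ k ∈ univ.erase i, (x k - x i - 1) / (x k - x i)))
      with hw
    have hrow : ∀ j, c j = ∑ i : Fin (n + 1), w i * M i j := by
      intro j
      rw [Fin.sum_univ_succ]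
      have h0 : w 0 * M 0 j = 1 := by simp [hw, M]
      have hs : ∀ i : Fin n, w i.succ * M i.succ j
          = -((((x i + 1 - α) / α) * ∏ k ∈ univ.erase i, (x k - x i - 1) / (x k - x i))
              * (α / ((x i - y j + α) * (x i - y j)))) := by
        intro i
        simp [hw, M]
        try ring
      rw [h0, Finset.sum_congr rfl (fun i _ => hs i), Finset.sum_neg_distrib]
      have hkey : c j = 1 - ∑ i : Fin n,
          (((x i + 1 - α) / α) * ∏ k ∈ univ.erase i, (x k - x i - 1) / (x k - x i))
            * (α / ((x i - y j + α) * (x i - y j))) :=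
        keyId x hinj α hα (y j) (fun i => h1 i j) (fun i => h2 i j)
      rw [hkey]
      ring
    have hceq : c = ∑ i, w i • M i := by
      funext j
      rw [hrow j]
      simp [Finset.sum_apply]
    have hdet : (M.updateRow 0 c).det = M.det := by
      rw [hceq, Matrix.det_updateRow_sum]
      simp [hw]
    rw [← hdet, Matrix.det_succ_row_zero]
    refine Finset.sum_congr rfl fun j _ => ?_
    have hsub : (M.updateRow 0 c).submatrix Fin.succ j.succAbove = Mdel j := by
      ext i k
      simp [Matrix.submatrix_apply, Matrix.updateRow_ne (Fin.succ_ne_zero i), M, Mdel]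
    rw [hsub, Matrix.updateRow_self]
  · -- degenerate case: x not injective, everything is zero
    rw [Function.not_injective_iff] at hinj
    obtain ⟨i, k, hx, hik⟩ := hinj
    have hM : M.det = 0 := by
      refine Matrix.det_zero_of_row_eq (i := i.succ) (j := k.succ)
        (fun h => hik (Fin.succ_injective _ h)) ?_
      funext j
      simp [M, hx]
    have hMd : ∀ j, (Mdel j).det = 0 := by
      intro j
      refine Matrix.det_zero_of_row_eq (i := i) (j := k) hik ?_
      funext m
      simp [Mdel, hx]
    simp [hM, hMd]
end
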